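/- Instability of strict saddles under the mirror map: let x̄ be a critical point of f ∈ C²(ℝⁿ) with λ_min(∇²f(x̄)) < 0, and define F(x) = (∇ψ)⁻¹(∇ψ(x) - γ∇f(x)) where ψ(x)=‖x‖⁴/4+‖x‖²/2 and γ > 0. Then F(x̄) = x̄ and the Jacobian DF(x̄) = Id - γ ∇²ψ(x̄)⁻¹ ∇²f(x̄) has an eigenvalue of magnitude strictly greater than 1. -/

import Mathlib

open scoped RealInnerProductSpace

noncomputable def psiEnt {n : ℕ} (x : EuclideanSpace ℝ (Fin n)) : ℝ :=
  ‖x‖ ^ 4 / 4 + ‖x‖ ^ 2 / 2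

section aux

variable {n : ℕ}

lemma phi_injective :
    Function.Injective (fun x : EuclideanSpace ℝ (Fin n) => (‖x‖ ^ 2 + 1) • x) := by
  intro x y h
  simp only at h
  have hn : (‖x‖ ^ 2 + 1) * ‖x‖ = (‖y‖ ^ 2 + 1) * ‖y‖ := by
    have := congrArg norm h
    rwa [norm_smul, norm_smul, Real.norm_eq_abs, Real.norm_eq_abs,
      abs_of_pos (by positivity), abs_of_pos (by positivity)] at this
  have hfac : (‖x‖ - ‖y‖) * (‖x‖ ^ 2 + ‖x‖ * ‖y‖ + ‖y‖ ^ 2 + 1) = 0 := by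
    linear_combination hn
  have hpos : 0 < ‖x‖ ^ 2 + ‖x‖ * ‖y‖ + ‖y‖ ^ 2 + 1 := by
    nlinarith [norm_nonneg x, norm_nonneg y]
  have hxy : ‖x‖ = ‖y‖ := by
    rcases mul_eq_zero.1 hfac with h' | h'
    · linarith [sub_eq_zero.1 h']
    · linarith
  rw [← hxy] at h
  exact smul_right_injective _ (by positivity) h

lemma isSymm_fderiv_gradient {f : EuclideanSpace ℝ (Fin n) → ℝ} (hf : ContDiff ℝ 2 f)
    (x0 v w : EuclideanSpace ℝ (Fin n)) :
    ⟪fderiv ℝ (gradient f) x0 v, w⟫ = ⟪fderiv ℝ (gradient f) x0 w, v⟫ := by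
  set e := (InnerProductSpace.toDual ℝ (EuclideanSpace ℝ (Fin n))).symm.toContinuousLinearEquiv
  have hg : gradient f = ⇑e ∘ fderiv ℝ f := rfl
  have hkey : ∀ u : EuclideanSpace ℝ (Fin n),
      fderiv ℝ (gradient f) x0 u = e (fderiv ℝ (fderiv ℝ f) x0 u) := by
    intro u
    rw [hg, ContinuousLinearEquiv.comp_fderiv]
    rfl
  have hsymm : ∀ u u' : EuclideanSpace ℝ (Fin n),
      fderiv ℝ (fderiv ℝ f) x0 u u' = fderiv ℝ (fderiv ℝ f) x0 u' u := by
    intro u u'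
    refine second_derivative_symmetric (x := x0)
      (fun y => (hf.differentiable two_ne_zero y).hasFDerivAt) ?_ u u'
    exact (((hf.fderiv_right le_rfl).differentiable one_ne_zero) x0).hasFDerivAt
  rw [hkey v, hkey w]
  have h1 : ∀ d : EuclideanSpace ℝ (Fin n) →L[ℝ] ℝ, ∀ u : EuclideanSpace ℝ (Fin n),
      ⟪e d, u⟫ = d u := fun d u => InnerProductSpace.toDual_symm_apply
  rw [h1, h1, hsymm]

lemma contDiff_gradient {f : EuclideanSpace ℝ (Fin n) → ℝ} (hf : ContDiff ℝ 2 f) :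
    ContDiff ℝ 1 (gradient f) := by
  have hg : gradient f =
      fun x => (InnerProductSpace.toDual ℝ (EuclideanSpace ℝ (Fin n))).symm (fderiv ℝ f x) := rfl
  rw [hg]
  exact ((InnerProductSpace.toDual ℝ _).symm.contDiff).comp (hf.fderiv_right le_rfl)

end aux

noncomputable def hessH {n : ℕ} (xb : EuclideanSpace ℝ (Fin n)) :
    EuclideanSpace ℝ (Fin n) →L[ℝ] EuclideanSpace ℝ (Fin n) :=
  (‖xb‖ ^ 2 + 1) • ContinuousLinearMap.id ℝ _ + (2 • innerSL ℝ xb).smulRight xb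

lemma hessH_apply {n : ℕ} (xb h : EuclideanSpace ℝ (Fin n)) :
    hessH xb h = (‖xb‖ ^ 2 + 1) • h + (2 * ⟪xb, h⟫) • xb := by
  simp only [hessH, ContinuousLinearMap.add_apply, ContinuousLinearMap.coe_smul', Pi.smul_apply,
    ContinuousLinearMap.coe_id', id_eq, ContinuousLinearMap.smulRight_apply,
    ContinuousLinearMap.smul_apply, innerSL_apply_apply]
  rw [two_mul, add_smul, two_smul, add_smul]

lemma inner_hessH_symm {n : ℕ} (xb x y : EuclideanSpace ℝ (Fin n)) :
    ⟪x, hessH xb y⟫ = ⟪hessH xb x, y⟫ := by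
  simp only [hessH_apply, inner_add_left, inner_add_right, real_inner_smul_left,
    real_inner_smul_right]
  linear_combination (-2 * ⟪xb, y⟫) * real_inner_comm x xb

lemma inner_hessH_ge {n : ℕ} (xb x : EuclideanSpace ℝ (Fin n)) :
    ‖x‖ ^ 2 ≤ ⟪x, hessH xb x⟫ := by
  have h : ⟪x, hessH xb x⟫ = (‖xb‖ ^ 2 + 1) * ‖x‖ ^ 2 + 2 * ⟪xb, x⟫ ^ 2 := by
    rw [hessH_apply, inner_add_right, real_inner_smul_right, real_inner_smul_right,
      real_inner_self_eq_norm_sq, real_inner_comm x xb]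
    ring
  nlinarith [sq_nonneg ⟪xb, x⟫, sq_nonneg (‖xb‖ * ‖x‖)]

lemma inner_hessH_pos {n : ℕ} (xb : EuclideanSpace ℝ (Fin n)) {x : EuclideanSpace ℝ (Fin n)}
    (hx : x ≠ 0) : 0 < ⟪x, hessH xb x⟫ := by
  have hx' : 0 < ‖x‖ := norm_pos_iff.2 hx
  calc (0:ℝ) < ‖x‖ ^ 2 := by positivity
  _ ≤ _ := inner_hessH_ge xb x

lemma hessH_injective {n : ℕ} (xb : EuclideanSpace ℝ (Fin n)) :
    Function.Injective (hessH xb) := by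
  intro x y hxy
  by_contra hne
  have hz : x - y ≠ 0 := sub_ne_zero.2 hne
  have h0 : hessH xb (x - y) = 0 := by rw [map_sub, hxy, sub_self]
  have := inner_hessH_pos xb hz
  rw [h0, inner_zero_right] at this
  exact lt_irrefl _ this

noncomputable def hessEquiv {n : ℕ} (xb : EuclideanSpace ℝ (Fin n)) :
    EuclideanSpace ℝ (Fin n) ≃L[ℝ] EuclideanSpace ℝ (Fin n) :=
  (LinearEquiv.ofInjectiveEndo ((hessH xb) : _ →ₗ[ℝ] _) (hessH_injective xb)).toContinuousLinearEquiv

lemma hessEquiv_coe {n : ℕ} (xb : EuclideanSpace ℝ (Fin n)) :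
    ((hessEquiv xb) : EuclideanSpace ℝ (Fin n) →L[ℝ] EuclideanSpace ℝ (Fin n)) = hessH xb := by
  ext x; rfl

lemma hasGradientAt_psiEnt {n : ℕ} (x : EuclideanSpace ℝ (Fin n)) :
    HasGradientAt psiEnt ((‖x‖ ^ 2 + 1) • x) x := by
  have hu : HasFDerivAt (fun y : EuclideanSpace ℝ (Fin n) => ‖y‖ ^ 2) (2 • innerSL ℝ x) x :=
    (hasStrictFDerivAt_norm_sq x).hasFDerivAt
  have h1 := (((hu.mul hu).const_mul ((4:ℝ)⁻¹)).add (hu.const_mul ((2:ℝ)⁻¹)))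
  have h2 : (fun y : EuclideanSpace ℝ (Fin n) => (4:ℝ)⁻¹ * (‖y‖ ^ 2 * ‖y‖ ^ 2) + (2:ℝ)⁻¹ * ‖y‖ ^ 2) = psiEnt := by
    funext y; simp only [psiEnt]; ring
  change HasFDerivAt (fun y : EuclideanSpace ℝ (Fin n) => (4:ℝ)⁻¹ * (‖y‖ ^ 2 * ‖y‖ ^ 2) + (2:ℝ)⁻¹ * ‖y‖ ^ 2) _ x at h1
  rw [h2] at h1
  rw [hasGradientAt_iff_hasFDerivAt]
  refine h1.congr_fderiv ?_
  ext y
  simp only [InnerProductSpace.toDual_apply_apply, real_inner_smul_left,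
    ContinuousLinearMap.add_apply, ContinuousLinearMap.coe_smul', Pi.smul_apply,
    ContinuousLinearMap.smul_apply, innerSL_apply_apply, smul_eq_mul]
  ring

lemma hasStrictFDerivAt_phi {n : ℕ} (x : EuclideanSpace ℝ (Fin n)) :
    HasStrictFDerivAt (fun y : EuclideanSpace ℝ (Fin n) => (‖y‖ ^ 2 + 1) • y) (hessH x) x := by
  have h := ((hasStrictFDerivAt_norm_sq x).add_const 1).smul (hasStrictFDerivAt_id x)
  exact h

/-- Type synonym carrying the inner product `⟪x, hessH xb y⟫`. -/
def HSp {n : ℕ} (_xb : EuclideanSpace ℝ (Fin n)) : Type := EuclideanSpace ℝ (Fin n)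

section HSp

variable {n : ℕ} (xb : EuclideanSpace ℝ (Fin n))

instance : AddCommGroup (HSp xb) := inferInstanceAs (AddCommGroup (EuclideanSpace ℝ (Fin n)))
noncomputable instance : Module ℝ (HSp xb) := inferInstanceAs (Module ℝ (EuclideanSpace ℝ (Fin n)))

/-- Interpret an element of the synonym as a Euclidean vector. -/
def HSp.toE (x : HSp xb) : EuclideanSpace ℝ (Fin n) := x

/-- Interpret a Euclidean vector as an element of the synonym. -/
def HSp.ofE (x : EuclideanSpace ℝ (Fin n)) : HSp xb := x

noncomputable def hCore : InnerProductSpace.Core ℝ (HSp xb) where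
  inner x y := ⟪HSp.toE xb x, hessH xb (HSp.toE xb y)⟫
  conj_inner_symm x y := by
    simpa using (inner_hessH_symm xb (HSp.toE xb y) (HSp.toE xb x)).trans
      (real_inner_comm _ _)
  re_inner_nonneg x := by
    rcases eq_or_ne (HSp.toE xb x) 0 with h | h
    · simp [h]
    · simpa using (inner_hessH_pos xb h).le
  definite x hx := by
    by_contra h
    exact absurd hx (ne_of_gt (inner_hessH_pos xb (fun h0 => h h0)))
  add_left x y z :=
    inner_add_left (𝕜 := ℝ) (HSp.toE xb x) (HSp.toE xb y) (hessH xb (HSp.toE xb z))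
  smul_left x y r := by
    rw [show HSp.toE xb (r • x) = r • HSp.toE xb x from rfl]
    simpa using real_inner_smul_left (HSp.toE xb x) (hessH xb (HSp.toE xb y)) r

noncomputable instance : NormedAddCommGroup (HSp xb) := (hCore xb).toNormedAddCommGroup
noncomputable instance : InnerProductSpace ℝ (HSp xb) := InnerProductSpace.ofCore _

noncomputable def hspEquiv : EuclideanSpace ℝ (Fin n) ≃ₗ[ℝ] HSp xb where
  toFun x := HSp.ofE xb x
  invFun x := HSp.toE xb x
  map_add' _ _ := rfl
  map_smul' _ _ := rfl
  left_inv _ := rfl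
  right_inv _ := rfl

instance : FiniteDimensional ℝ (HSp xb) := Module.Finite.equiv (hspEquiv xb)

lemma hsp_inner_def (x y : HSp xb) :
    (inner ℝ x y : ℝ) = ⟪HSp.toE xb x, hessH xb (HSp.toE xb y)⟫ := rfl

end HSp

/-- Instability of strict saddles under the mirror map: at a critical point `x̄`
of `f` where the Hessian has a strictly negative eigenvalue, the mirror map
`F = (∇ψ)⁻¹ ∘ (∇ψ - γ∇f)` fixes `x̄` and its Jacobian at `x̄` has a real
eigenvalue of magnitude strictly greater than `1`. -/
theorem strict_saddle_unstable_mirror_map {n : ℕ}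
    (f : EuclideanSpace ℝ (Fin n) → ℝ) (hf : ContDiff ℝ 2 f)
    (γ : ℝ) (hγ : 0 < γ)
    (xbar : EuclideanSpace ℝ (Fin n))
    (hcrit : gradient f xbar = 0)
    (hsaddle : ∃ v : EuclideanSpace ℝ (Fin n), ‖v‖ = 1 ∧
      ⟪v, fderiv ℝ (gradient f) xbar v⟫ < 0)
    (F : EuclideanSpace ℝ (Fin n) → EuclideanSpace ℝ (Fin n))
    (hF : F = fun x => Function.invFun (gradient (psiEnt (n := n)))
      (gradient (psiEnt (n := n)) x - γ • gradient f x)) :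
    F xbar = xbar ∧
    ∃ (μ : ℝ) (w : EuclideanSpace ℝ (Fin n)), w ≠ 0 ∧
      fderiv ℝ F xbar w = μ • w ∧ 1 < |μ| := by
  classical
  obtain ⟨v, hv1, hv2⟩ := hsaddle
  have hvne : v ≠ 0 := by intro h; rw [h, norm_zero] at hv1; exact one_ne_zero hv1.symm
  have hΦgrad : gradient (psiEnt (n := n)) =
      fun x : EuclideanSpace ℝ (Fin n) => (‖x‖ ^ 2 + 1) • x :=
    gradient_eq (fun x => hasGradientAt_psiEnt x)
  set Φ : EuclideanSpace ℝ (Fin n) → EuclideanSpace ℝ (Fin n) :=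
    fun x => (‖x‖ ^ 2 + 1) • x with hΦ
  have hFdef : F = fun x => Function.invFun Φ (Φ x - γ • gradient f x) := by
    rw [hF, hΦgrad]
  have hΦlinv : Function.LeftInverse (Function.invFun Φ) Φ :=
    Function.leftInverse_invFun phi_injective
  set A := fderiv ℝ (gradient f) xbar with hA
  have hAs : HasStrictFDerivAt (gradient f) A xbar :=
    ((contDiff_gradient hf).contDiffAt).hasStrictFDerivAt one_ne_zero
  have hΦs : HasStrictFDerivAt Φ
      ((hessEquiv xbar : EuclideanSpace ℝ (Fin n) →L[ℝ] EuclideanSpace ℝ (Fin n))) xbar := by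
    rw [hessEquiv_coe]; exact hasStrictFDerivAt_phi xbar
  set G : EuclideanSpace ℝ (Fin n) → EuclideanSpace ℝ (Fin n) :=
    fun x => Φ x - γ • gradient f x with hG
  have hGx : G xbar = Φ xbar := by simp [hG, hcrit]
  set M := ((hessEquiv xbar : EuclideanSpace ℝ (Fin n) →L[ℝ] EuclideanSpace ℝ (Fin n)))
      - γ • A with hM
  have hGs : HasStrictFDerivAt G M xbar := hΦs.sub (hAs.const_smul γ)
  have hfix : F xbar = xbar := by
    rw [hFdef]
    simp only [hcrit, smul_zero, sub_zero]
    exact hΦlinv xbar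
  refine ⟨hfix, ?_⟩
  set linv := hΦs.localInverse Φ _ xbar with hlinvdef
  have hlinvs : HasStrictFDerivAt linv
      (((hessEquiv xbar).symm : EuclideanSpace ℝ (Fin n) →L[ℝ] EuclideanSpace ℝ (Fin n)))
      (Φ xbar) := hΦs.to_localInverse
  have hev : ∀ᶠ x in nhds xbar, Φ (linv (G x)) = G x := by
    have hU := hΦs.eventually_right_inverse
    rw [← hGx] at hU
    exact (hGs.continuousAt).eventually hU
  have hFeq : F =ᶠ[nhds xbar] fun x => linv (G x) := by
    filter_upwards [hev] with x hx
    rw [hFdef]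
    show Function.invFun Φ (G x) = linv (G x)
    conv_lhs => rw [← hx]
    exact hΦlinv _
  have hcomp : HasStrictFDerivAt (fun x => linv (G x))
      ((((hessEquiv xbar).symm : EuclideanSpace ℝ (Fin n) →L[ℝ] EuclideanSpace ℝ (Fin n))).comp M) xbar := by
    have h := hlinvs
    rw [← hGx] at h
    exact h.comp xbar hGs
  have hFd : HasFDerivAt F ((((hessEquiv xbar).symm :
      EuclideanSpace ℝ (Fin n) →L[ℝ] EuclideanSpace ℝ (Fin n))).comp M) xbar :=
    hcomp.hasFDerivAt.congr_of_eventuallyEq hFeq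
  set T := ((((hessEquiv xbar).symm : EuclideanSpace ℝ (Fin n) →L[ℝ] EuclideanSpace ℝ (Fin n))).comp M) with hT
  have hfderivF : fderiv ℝ F xbar = T := hFd.fderiv
  have hHT : ∀ w, hessH xbar (T w) = M w := by
    intro w
    have h1 : hessH xbar (T w) = (hessEquiv xbar) ((hessEquiv xbar).symm (M w)) := by
      rw [← hessEquiv_coe]; rfl
    rw [h1, ContinuousLinearEquiv.apply_symm_apply]
  have hMv : ∀ w, M w = hessH xbar w - γ • A w := by
    intro w
    rw [hM]
    simp [hessEquiv_coe]
  have hAsymm : ∀ u u' : EuclideanSpace ℝ (Fin n), ⟪A u, u'⟫ = ⟪A u', u⟫ := fun u u' =>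
    isSymm_fderiv_gradient hf xbar u u'
  have key : ∀ x y : EuclideanSpace ℝ (Fin n),
      ⟪T x, hessH xbar y⟫ = ⟪x, hessH xbar (T y)⟫ := by
    intro x y
    rw [inner_hessH_symm xbar (T x) y, hHT x, hHT y, hMv x, hMv y, inner_sub_left,
      inner_sub_right, real_inner_smul_left, real_inner_smul_right,
      inner_hessH_symm xbar x y]
    have h1 := hAsymm x y
    have h2 := real_inner_comm x (A y)
    linear_combination (-γ) * h1 - γ * h2
  set T' : HSp xbar →ₗ[ℝ] HSp xbar :=
    { toFun := fun w => HSp.ofE xbar (T (HSp.toE xbar w))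
      map_add' := fun a b => by exact T.map_add a b
      map_smul' := fun c a => by exact T.map_smul c a } with hT'
  have hTsym : T'.IsSymmetric := by
    intro a b
    exact key (HSp.toE xbar a) (HSp.toE xbar b)
  haveI : Nontrivial (HSp xbar) := ⟨HSp.ofE xbar v, 0, by exact hvne⟩
  have hEig := hTsym.hasEigenvalue_iSup_of_finiteDimensional
  set μ : ℝ := ⨆ x : { x : HSp xbar // x ≠ 0 },
      RCLike.re (inner ℝ (T' x) (x : HSp xbar) : ℝ) / ‖(x : HSp xbar)‖ ^ 2 with hμdef
  have hEig' : Module.End.HasEigenvalue T' μ := by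
    simpa using hEig
  set Tc := LinearMap.toContinuousLinearMap T' with hTc
  have hbdd : BddAbove (Set.range fun x : { x : HSp xbar // x ≠ 0 } =>
      RCLike.re (inner ℝ (T' x) (x : HSp xbar) : ℝ) / ‖(x : HSp xbar)‖ ^ 2) := by
    refine ⟨‖Tc‖, ?_⟩
    rintro r ⟨x, rfl⟩
    have hx : (0:ℝ) < ‖(x : HSp xbar)‖ := norm_pos_iff.2 x.2
    simp only [RCLike.re_to_real]
    rw [div_le_iff₀ (by positivity)]
    have h1 : (inner ℝ (T' x) (x : HSp xbar) : ℝ) ≤ ‖T' (x : HSp xbar)‖ * ‖(x : HSp xbar)‖ :=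
      real_inner_le_norm _ _
    have h2 : ‖T' (x : HSp xbar)‖ ≤ ‖Tc‖ * ‖(x : HSp xbar)‖ := by
      have := Tc.le_opNorm (x : HSp xbar)
      exact this
    calc (inner ℝ (T' x) (x : HSp xbar) : ℝ) ≤ ‖T' (x : HSp xbar)‖ * ‖(x : HSp xbar)‖ := h1
    _ ≤ (‖Tc‖ * ‖(x : HSp xbar)‖) * ‖(x : HSp xbar)‖ := by
        exact mul_le_mul_of_nonneg_right h2 (norm_nonneg _)
    _ = ‖Tc‖ * ‖(x : HSp xbar)‖ ^ 2 := by ring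
  set v' : HSp xbar := HSp.ofE xbar v with hv'
  have hv'ne : v' ≠ 0 := hvne
  have ha : (0:ℝ) < ⟪v, hessH xbar v⟫ := inner_hessH_pos xbar hvne
  have hb : ⟪A v, v⟫ < 0 := by rw [real_inner_comm]; exact hv2
  have hnum : (inner ℝ (T' v') v' : ℝ) = ⟪v, hessH xbar v⟫ - γ * ⟪A v, v⟫ := by
    show ⟪T v, hessH xbar v⟫ = _
    rw [inner_hessH_symm xbar (T v) v, hHT v, hMv v, inner_sub_left, real_inner_smul_left,
      inner_hessH_symm xbar v v]
  have hden : ‖v'‖ ^ 2 = ⟪v, hessH xbar v⟫ := by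
    rw [← real_inner_self_eq_norm_sq]
    rfl
  have hval : (1:ℝ) < RCLike.re (inner ℝ (T' v') v' : ℝ) / ‖v'‖ ^ 2 := by
    simp only [RCLike.re_to_real]
    rw [hnum, hden, lt_div_iff₀ ha]
    nlinarith
  have hμ1 : (1:ℝ) < μ := lt_of_lt_of_le hval (le_ciSup hbdd ⟨v', hv'ne⟩)
  obtain ⟨w, hw⟩ := hEig'.exists_hasEigenvector
  refine ⟨μ, HSp.toE xbar w, hw.2, ?_, lt_of_lt_of_le hμ1 (le_abs_self μ)⟩
  have happ : T' w = μ • w := hw.apply_eq_smul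
  rw [hfderivF]
  exact happ
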